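/- Let (X_n)_{n ≥ -1} be a second-order Galton–Watson process without immigration with X_0 = 1, X_{-1} = 0, offspring variables ξ and η satisfying E(ξ²) < ∞ and E(η²) < ∞, and let ϱ = (m_ξ + √(m_ξ²+4m_η))/2 be the spectral radius of the mean matrix, where m_ξ = E(ξ), m_η = E(η). If ϱ ∈ (0,1), then for all n ≥ 1, E(X_n²) ≤ c·ϱⁿ with c = 1 + Var(ξ)/(ϱ(1-ϱ)) + Var(η)/(ϱ²(1-ϱ)). -/

import Mathlib

open MeasureTheory ProbabilityTheory Filter Topology
open scoped ENNReal NNReal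

namespace Stmt19

variable {Ω : Type*}

lemma measurable_randSum {m : MeasurableSpace Ω} (N : Ω → ℕ) (f : ℕ → Ω → ℕ)
    (hN : Measurable[m] N) (hf : ∀ i, Measurable[m] (f i)) :
    Measurable[m] (fun ω => ∑ i ∈ Finset.range (N ω), f i ω) := by
  apply measurable_to_countable'
  intro v
  have h : (fun ω => ∑ i ∈ Finset.range (N ω), f i ω) ⁻¹' {v}
      = ⋃ k, (N ⁻¹' {k}) ∩ {ω | ∑ i ∈ Finset.range k, f i ω = v} := by
    ext ω
    simp only [Set.mem_preimage, Set.mem_singleton_iff, Set.mem_iUnion, Set.mem_inter_iff,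
      Set.mem_setOf_eq]
    constructor
    · intro h; exact ⟨N ω, rfl, h⟩
    · rintro ⟨k, rfl, h⟩; exact h
  rw [h]
  refine MeasurableSet.iUnion fun k => (hN (measurableSet_singleton k)).inter ?_
  have hm : Measurable[m] fun ω => ∑ i ∈ Finset.range k, f i ω :=
    Finset.measurable_sum _ (fun i _ => hf i)
  exact hm (measurableSet_singleton v)

lemma split [mΩ : MeasurableSpace Ω] {μ : Measure Ω} [IsProbabilityMeasure μ]
    {mH mB : MeasurableSpace Ω} (hH : mH ≤ mΩ) (hB : mB ≤ mΩ)
    (hInd : Indep mH mB μ) {N M : Ω → ℕ} (hN : Measurable[mH] N) (hM : Measurable[mH] M)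
    {F : ℕ → ℕ → Ω → ℝ≥0∞} (hF : ∀ k l, Measurable[mB] (F k l)) :
    ∫⁻ ω, F (N ω) (M ω) ω ∂μ
      = ∑' p : ℕ × ℕ, μ (N ⁻¹' {p.1} ∩ M ⁻¹' {p.2}) * ∫⁻ ω, F p.1 p.2 ω ∂μ := by
  set A : ℕ × ℕ → Set Ω := fun p => N ⁻¹' {p.1} ∩ M ⁻¹' {p.2} with hA
  have hAmH : ∀ p, MeasurableSet[mH] (A p) := fun p =>
    (hN (measurableSet_singleton p.1)).inter (hM (measurableSet_singleton p.2))
  have hAm : ∀ p, MeasurableSet[mΩ] (A p) := fun p => hH _ (hAmH p)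
  have hdisj : Pairwise (Function.onFun Disjoint A) := by
    intro p q hpq
    rw [Function.onFun, Set.disjoint_left]
    rintro ω ⟨h1, h2⟩ ⟨h3, h4⟩
    simp only [Set.mem_preimage, Set.mem_singleton_iff] at h1 h2 h3 h4
    exact hpq (Prod.ext (h1.symm.trans h3) (h2.symm.trans h4))
  have hcover : (⋃ p, A p) = Set.univ := by
    ext ω
    simp only [Set.mem_iUnion, Set.mem_univ, iff_true]
    exact ⟨(N ω, M ω), ⟨rfl, rfl⟩⟩
  calc ∫⁻ ω, F (N ω) (M ω) ω ∂μ = ∫⁻ ω in ⋃ p, A p, F (N ω) (M ω) ω ∂μ := by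
        rw [hcover, setLIntegral_univ]
    _ = ∑' p, ∫⁻ ω in A p, F (N ω) (M ω) ω ∂μ := lintegral_iUnion hAm hdisj _
    _ = ∑' p : ℕ × ℕ, μ (A p) * ∫⁻ ω, F p.1 p.2 ω ∂μ := by
        refine tsum_congr fun p => ?_
        have h1 : ∫⁻ ω in A p, F (N ω) (M ω) ω ∂μ = ∫⁻ ω in A p, F p.1 p.2 ω ∂μ := by
          refine setLIntegral_congr_fun (hAm p) ?_
          intro ω hω
          show F (N ω) (M ω) ω = F p.1 p.2 ω
          obtain ⟨h1, h2⟩ := hω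
          simp only [Set.mem_preimage, Set.mem_singleton_iff] at h1 h2
          rw [h1, h2]
        have h2 : ∫⁻ ω in A p, F p.1 p.2 ω ∂μ
            = ∫⁻ ω, (A p).indicator (fun _ => (1:ℝ≥0∞)) ω * F p.1 p.2 ω ∂μ := by
          rw [← lintegral_indicator (hAm p)]
          refine lintegral_congr fun ω => ?_
          by_cases hω : ω ∈ A p <;> simp [Set.indicator, hω]
        rw [h1, h2,
          lintegral_mul_eq_lintegral_mul_lintegral_of_independent_measurableSpace hH hB hInd
            (measurable_const.indicator (hAmH p)) (hF p.1 p.2)]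
        congr 1
        exact lintegral_indicator_one (hAm p)

lemma lint_sum_mul_sum [mΩ : MeasurableSpace Ω] {μ : Measure Ω}
    (u v : ℕ → Ω → ℝ≥0∞) (hu : ∀ i, Measurable (u i)) (hv : ∀ j, Measurable (v j)) (k l : ℕ)
    (c : ℕ → ℕ → ℝ≥0∞) (h : ∀ i < k, ∀ j < l, ∫⁻ ω, u i ω * v j ω ∂μ = c i j) :
    ∫⁻ ω, (∑ i ∈ Finset.range k, u i ω) * (∑ j ∈ Finset.range l, v j ω) ∂μ
      = ∑ i ∈ Finset.range k, ∑ j ∈ Finset.range l, c i j := by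
  have he : ∀ ω, (∑ i ∈ Finset.range k, u i ω) * (∑ j ∈ Finset.range l, v j ω)
      = ∑ i ∈ Finset.range k, ∑ j ∈ Finset.range l, u i ω * v j ω := fun ω =>
    Finset.sum_mul_sum _ _ _ _
  rw [lintegral_congr he,
    lintegral_finset_sum _ (fun i _ => Finset.measurable_sum _ (fun j _ => (hu i).fun_mul (hv j)))]
  refine Finset.sum_congr rfl fun i hi => ?_
  rw [lintegral_finset_sum _ (fun j _ => (hu i).fun_mul (hv j))]
  exact Finset.sum_congr rfl fun j hj => h i (Finset.mem_range.1 hi) j (Finset.mem_range.1 hj)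

lemma sum_ite_diag (k : ℕ) (s t : ℝ≥0∞) :
    ∑ i ∈ Finset.range k, ∑ j ∈ Finset.range k, (if i = j then s else t)
      = k * s + (k : ℝ≥0∞) * ((k : ℝ≥0∞) - 1) * t := by
  have hin : ∀ i ∈ Finset.range k,
      ∑ j ∈ Finset.range k, (if i = j then s else t) = s + (k - 1 : ℕ) * t := by
    intro i hi
    rw [← Finset.add_sum_erase _ _ hi, if_pos rfl]
    congr 1
    rw [Finset.sum_congr rfl (g := fun _ => t) (fun j hj => by
        rw [if_neg (fun h => (Finset.mem_erase.1 hj).1 h.symm)]),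
      Finset.sum_const, Finset.card_erase_of_mem hi, Finset.card_range, nsmul_eq_mul]
  rw [Finset.sum_congr rfl hin, Finset.sum_const, Finset.card_range, nsmul_eq_mul,
    mul_add, mul_assoc]
  congr 2
  rw [ENNReal.natCast_sub, Nat.cast_one]

end Stmt19
set_option maxHeartbeats 2000000 in
/-- A second-order Galton–Watson process without immigration started from `X₀ = 1`,
`X₋₁ = 0` (time shifted: `X 0` is `X₋₁` and `X 1` is `X₀`, so the paper's `Xₙ` is `X (n+1)`),
with square-integrable offspring distributions.  If the spectral radius
`ϱ = (m_ξ + √(m_ξ² + 4 m_η))/2` of the mean matrix lies in `(0,1)`, then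
`E(Xₙ²) ≤ c ϱⁿ` with `c = 1 + Var(ξ)/(ϱ(1-ϱ)) + Var(η)/(ϱ²(1-ϱ))`. -/
theorem stmt19 {Ω : Type*} [MeasurableSpace Ω] (μ : Measure Ω) [IsProbabilityMeasure μ]
    (X : ℕ → Ω → ℕ) (ξ η : ℕ → ℕ → Ω → ℕ)
    (hXm : ∀ n, Measurable (X n))
    (hξm : ∀ n i, Measurable (ξ n i)) (hηm : ∀ n i, Measurable (η n i))
    (hinit0 : ∀ ω, X 0 ω = 0) (hinit1 : ∀ ω, X 1 ω = 1)
    (hrec : ∀ n, 2 ≤ n → ∀ ω, X n ω =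
      ∑ i ∈ Finset.range (X (n - 1) ω), ξ n i ω +
        ∑ j ∈ Finset.range (X (n - 2) ω), η n j ω)
    (hindep : iIndepFun
      (Sum.elim (fun p : ℕ × ℕ => ξ p.1 p.2) (fun p : ℕ × ℕ => η p.1 p.2)) μ)
    (hξid : ∀ n i, IdentDistrib (ξ n i) (ξ 0 0) μ μ)
    (hηid : ∀ n i, IdentDistrib (η n i) (η 0 0) μ μ)
    (hξ2 : Integrable (fun ω => (ξ 0 0 ω : ℝ) ^ 2) μ)
    (hη2 : Integrable (fun ω => (η 0 0 ω : ℝ) ^ 2) μ)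
    (mξ mη ϱ : ℝ)
    (hmξ : mξ = ∫ ω, (ξ 0 0 ω : ℝ) ∂μ) (hmη : mη = ∫ ω, (η 0 0 ω : ℝ) ∂μ)
    (hϱ : ϱ = (mξ + Real.sqrt (mξ ^ 2 + 4 * mη)) / 2)
    (hϱ0 : 0 < ϱ) (hϱ1 : ϱ < 1)
    (c : ℝ)
    (hc : c = 1 + variance (fun ω => (ξ 0 0 ω : ℝ)) μ / (ϱ * (1 - ϱ))
            + variance (fun ω => (η 0 0 ω : ℝ)) μ / (ϱ ^ 2 * (1 - ϱ))) :
    ∀ n, 1 ≤ n → (∫ ω, (X (n + 1) ω : ℝ) ^ 2 ∂μ) ≤ c * ϱ ^ n := by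
  classical
  -- real-number facts
  have hmξ0 : 0 ≤ mξ := by rw [hmξ]; exact integral_nonneg fun ω => by positivity
  have hmη0 : 0 ≤ mη := by rw [hmη]; exact integral_nonneg fun ω => by positivity
  have hsqnn : 0 ≤ Real.sqrt ϱ := Real.sqrt_nonneg ϱ
  have hsq : Real.sqrt ϱ ^ 2 = ϱ := Real.sq_sqrt hϱ0.le
  have hsqpos : 0 < Real.sqrt ϱ := Real.sqrt_pos.2 hϱ0
  have hsqle1 : Real.sqrt ϱ ≤ 1 := by nlinarith
  have hs4 : Real.sqrt (mξ^2 + 4*mη) ^ 2 = mξ^2 + 4*mη := Real.sq_sqrt (by positivity)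
  have hs4nn : 0 ≤ Real.sqrt (mξ^2 + 4*mη) := Real.sqrt_nonneg _
  have hroot : ϱ ^ 2 = mξ * ϱ + mη := by rw [hϱ]; nlinarith
  have hmξϱ : mξ ≤ ϱ := by rw [hϱ]; nlinarith
  have hϱsq : ϱ ≤ Real.sqrt ϱ := by nlinarith
  have hkey3 : mξ * Real.sqrt ϱ + mη ≤ ϱ * Real.sqrt ϱ := by
    nlinarith [mul_nonneg (sub_nonneg.2 hmξϱ) (sub_nonneg.2 hϱsq)]
  -- integrability
  set ξR : Ω → ℝ := fun ω => (ξ 0 0 ω : ℝ) with hξRdef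
  set ηR : Ω → ℝ := fun ω => (η 0 0 ω : ℝ) with hηRdef
  have hcastM : Measurable fun x : ℕ => (x : ℝ) := Measurable.of_discrete
  have hξRm : Measurable ξR := hcastM.comp (hξm 0 0)
  have hηRm : Measurable ηR := hcastM.comp (hηm 0 0)
  have hξint : Integrable ξR μ := by
    refine (hξ2.add (integrable_const 1)).mono hξRm.aestronglyMeasurable ?_
    filter_upwards with ω
    have h0 : (0:ℝ) ≤ ξR ω := by positivity
    simp only [Pi.add_apply]
    rw [Real.norm_eq_abs, Real.norm_eq_abs, abs_of_nonneg h0, abs_of_nonneg (by positivity)]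
    nlinarith [sq_nonneg (ξR ω - 1)]
  have hηint : Integrable ηR μ := by
    refine (hη2.add (integrable_const 1)).mono hηRm.aestronglyMeasurable ?_
    filter_upwards with ω
    have h0 : (0:ℝ) ≤ ηR ω := by positivity
    simp only [Pi.add_apply]
    rw [Real.norm_eq_abs, Real.norm_eq_abs, abs_of_nonneg h0, abs_of_nonneg (by positivity)]
    nlinarith [sq_nonneg (ηR ω - 1)]
  have hξmem : MemLp ξR 2 μ :=
    (memLp_two_iff_integrable_sq hξRm.aestronglyMeasurable).2 (by exact hξ2)
  have hηmem : MemLp ηR 2 μ :=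
    (memLp_two_iff_integrable_sq hηRm.aestronglyMeasurable).2 (by exact hη2)
  set vξ : ℝ := variance ξR μ with hvξdef
  set vη : ℝ := variance ηR μ with hvηdef
  have hvξ0 : 0 ≤ vξ := variance_nonneg _ _
  have hvη0 : 0 ≤ vη := variance_nonneg _ _
  have hvarξ : vξ = (∫ ω, ξR ω ^ 2 ∂μ) - mξ ^ 2 := by
    rw [hvξdef, variance_eq_sub hξmem, hmξ]
    simp only [Pi.pow_apply]
  have hvarη : vη = (∫ ω, ηR ω ^ 2 ∂μ) - mη ^ 2 := by
    rw [hvηdef, variance_eq_sub hηmem, hmη]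
    simp only [Pi.pow_apply]
  have hm2ξ : mξ ^ 2 ≤ ∫ ω, ξR ω ^ 2 ∂μ := by linarith [hvξ0, hvarξ]
  have hm2η : mη ^ 2 ≤ ∫ ω, ηR ω ^ 2 ∂μ := by linarith [hvη0, hvarη]
  -- constant facts
  have hc1R : 1 ≤ c := by
    have h1 : 0 ≤ vξ / (ϱ * (1 - ϱ)) := div_nonneg hvξ0 (mul_nonneg hϱ0.le (by linarith))
    have h2 : 0 ≤ vη / (ϱ ^ 2 * (1 - ϱ)) := div_nonneg hvη0 (mul_nonneg (by positivity) (by linarith))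
    rw [hc]; linarith
  have hc0 : 0 ≤ c := by linarith
  have hcΔ : c * (ϱ^2 * (1 - ϱ)) = ϱ^2 * (1 - ϱ) + vξ * ϱ + vη := by
    rw [hc]
    have h1 : ϱ ≠ 0 := ne_of_gt hϱ0
    have h2 : (1 : ℝ) - ϱ ≠ 0 := by linarith
    field_simp
  have hcineq : vξ * ϱ + vη + c * ϱ ^ 3 ≤ c * ϱ ^ 2 := by
    nlinarith [hcΔ, mul_pos (mul_pos hϱ0 hϱ0) (sub_pos.2 hϱ1)]
  -- ENNReal quantities
  set r : ℝ≥0∞ := ENNReal.ofReal (Real.sqrt ϱ) with hrdef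
  have hrpow : ∀ j : ℕ, r ^ j = ENNReal.ofReal (Real.sqrt ϱ ^ j) := fun j => by
    rw [hrdef, ← ENNReal.ofReal_pow hsqnn]
  have hrne : r ≠ ∞ := ENNReal.ofReal_ne_top
  have hr0 : r ≠ 0 := by simp [hrdef, ENNReal.ofReal_eq_zero, not_le, hsqpos]
  have hr1 : r ≤ 1 := by
    rw [hrdef, ← ENNReal.ofReal_one]; exact ENNReal.ofReal_le_ofReal hsqle1
  have hr2 : r ^ 2 = ENNReal.ofReal ϱ := by rw [hrpow 2, hsq]
  set C : ℝ≥0∞ := ENNReal.ofReal c with hCdef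
  have hC1 : 1 ≤ C := by
    rw [hCdef, ← ENNReal.ofReal_one]; exact ENNReal.ofReal_le_ofReal hc1R
  set Mx : ℝ≥0∞ := ∫⁻ ω, (ξ 0 0 ω : ℝ≥0∞) ∂μ with hMxdef
  set My : ℝ≥0∞ := ∫⁻ ω, (η 0 0 ω : ℝ≥0∞) ∂μ with hMydef
  set Sx : ℝ≥0∞ := ∫⁻ ω, (ξ 0 0 ω : ℝ≥0∞) ^ 2 ∂μ with hSxdef
  set Sy : ℝ≥0∞ := ∫⁻ ω, (η 0 0 ω : ℝ≥0∞) ^ 2 ∂μ with hSydef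
  have hMxR : Mx = ENNReal.ofReal mξ := by
    rw [hmξ, ofReal_integral_eq_lintegral_ofReal hξint
      (Filter.Eventually.of_forall fun ω => by positivity), hMxdef]
    exact lintegral_congr fun ω => by rw [ENNReal.ofReal_natCast]
  have hMyR : My = ENNReal.ofReal mη := by
    rw [hmη, ofReal_integral_eq_lintegral_ofReal hηint
      (Filter.Eventually.of_forall fun ω => by positivity), hMydef]
    exact lintegral_congr fun ω => by rw [ENNReal.ofReal_natCast]
  have hSxR : Sx = ENNReal.ofReal (∫ ω, ξR ω ^ 2 ∂μ) := by
    rw [ofReal_integral_eq_lintegral_ofReal hξ2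
      (Filter.Eventually.of_forall fun ω => by positivity), hSxdef]
    refine lintegral_congr fun ω => ?_
    rw [ENNReal.ofReal_pow (by positivity), ENNReal.ofReal_natCast]
  have hSyR : Sy = ENNReal.ofReal (∫ ω, ηR ω ^ 2 ∂μ) := by
    rw [ofReal_integral_eq_lintegral_ofReal hη2
      (Filter.Eventually.of_forall fun ω => by positivity), hSydef]
    refine lintegral_congr fun ω => ?_
    rw [ENNReal.ofReal_pow (by positivity), ENNReal.ofReal_natCast]
  have hMx2le : Mx ^ 2 ≤ Sx := by
    rw [hMxR, hSxR, ← ENNReal.ofReal_pow hmξ0]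
    exact ENNReal.ofReal_le_ofReal hm2ξ
  have hMy2le : My ^ 2 ≤ Sy := by
    rw [hMyR, hSyR, ← ENNReal.ofReal_pow hmη0]
    exact ENNReal.ofReal_le_ofReal hm2η
  set Vx : ℝ≥0∞ := Sx - Mx ^ 2 with hVxdef
  set Vy : ℝ≥0∞ := Sy - My ^ 2 with hVydef
  have hSxV : Sx = Vx + Mx ^ 2 := (tsub_add_cancel_of_le hMx2le).symm
  have hSyV : Sy = Vy + My ^ 2 := (tsub_add_cancel_of_le hMy2le).symm
  have hVxR : Vx = ENNReal.ofReal vξ := by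
    rw [hVxdef, hSxR, hMxR, ← ENNReal.ofReal_pow hmξ0,
      ← ENNReal.ofReal_sub _ (by positivity), ← hvarξ]
  have hVyR : Vy = ENNReal.ofReal vη := by
    rw [hVydef, hSyR, hMyR, ← ENNReal.ofReal_pow hmη0,
      ← ENNReal.ofReal_sub _ (by positivity), ← hvarη]
  have hrec4 : Mx * r ^ 2 + My = r ^ 4 := by
    rw [hMxR, hMyR, hr2, hrpow 4, ← ENNReal.ofReal_mul hmξ0,
      ← ENNReal.ofReal_add (by positivity) hmη0]
    congr 1
    nlinarith [hsq]
  have hrec3 : Mx * r + My ≤ r ^ 3 := by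
    rw [hMxR, hMyR, hrdef, hrpow 3, ← ENNReal.ofReal_mul hmξ0,
      ← ENNReal.ofReal_add (by positivity) hmη0]
    refine ENNReal.ofReal_le_ofReal ?_
    nlinarith [hkey3]
  have hfinal : Vx * r ^ 2 + Vy + C * r ^ 6 ≤ C * r ^ 4 := by
    rw [hVxR, hVyR, hr2, hrpow 6, hrpow 4, hCdef, ← ENNReal.ofReal_mul hvξ0,
      ← ENNReal.ofReal_mul hc0, ← ENNReal.ofReal_add (by positivity) hvη0,
      ← ENNReal.ofReal_add (by positivity) (by positivity), ← ENNReal.ofReal_mul hc0]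
    refine ENNReal.ofReal_le_ofReal ?_
    have h6 : Real.sqrt ϱ ^ 6 = ϱ ^ 3 := by
      rw [show (6:ℕ) = 2*3 from rfl, pow_mul, hsq]
    have h4 : Real.sqrt ϱ ^ 4 = ϱ ^ 2 := by
      rw [show (4:ℕ) = 2*2 from rfl, pow_mul, hsq]
    rw [h6, h4]
    linarith [hcineq]

  -- sigma-algebra setup
  set FF : (ℕ×ℕ) ⊕ (ℕ×ℕ) → Ω → ℕ :=
    Sum.elim (fun p : ℕ × ℕ => ξ p.1 p.2) (fun p : ℕ × ℕ => η p.1 p.2) with hFFdef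
  have hFFm : ∀ i, Measurable (FF i) := by
    rintro (⟨a,b⟩|⟨a,b⟩)
    · exact hξm a b
    · exact hηm a b
  set tI : (ℕ×ℕ) ⊕ (ℕ×ℕ) → ℕ := Sum.elim Prod.fst Prod.fst with htIdef
  set mF : (ℕ×ℕ) ⊕ (ℕ×ℕ) → MeasurableSpace Ω :=
    fun i => MeasurableSpace.comap (FF i) inferInstance with hmFdef
  have hmFle : ∀ i, mF i ≤ (inferInstance : MeasurableSpace Ω) := fun i =>
    measurable_iff_comap_le.1 (hFFm i)
  set G : ℕ → MeasurableSpace Ω := fun n => ⨆ i ∈ {i | tI i ≤ n}, mF i with hGdef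
  set Bk : ℕ → MeasurableSpace Ω := fun n => ⨆ i ∈ {i | tI i = n}, mF i with hBkdef
  have hGle : ∀ n, G n ≤ (inferInstance : MeasurableSpace Ω) := fun n =>
    iSup₂_le fun i _ => hmFle i
  have hBkle : ∀ n, Bk n ≤ (inferInstance : MeasurableSpace Ω) := fun n =>
    iSup₂_le fun i _ => hmFle i
  have hGmono : ∀ {a b : ℕ}, a ≤ b → G a ≤ G b := fun {a b} hab => by
    simp only [hGdef]
    exact biSup_mono fun i hi => le_trans hi hab
  have hIndepGB : ∀ n, Indep (G n) (Bk (n+1)) μ := by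
    intro n
    refine indep_iSup_of_disjoint (m := mF) hmFle hindep.iIndep ?_
    rw [Set.disjoint_left]
    intro i hi hit
    simp only [Set.mem_setOf_eq] at hi hit
    omega
  have hξBk : ∀ n i, Measurable[Bk n] (ξ n i) := by
    intro n i
    have h : mF (Sum.inl (n, i)) ≤ Bk n := by
      simp only [hBkdef]
      exact le_biSup _ (show tI (Sum.inl (n,i)) = n from rfl)
    exact measurable_iff_comap_le.2 h
  have hηBk : ∀ n j, Measurable[Bk n] (η n j) := by
    intro n j
    have h : mF (Sum.inr (n, j)) ≤ Bk n := by
      simp only [hBkdef]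
      exact le_biSup _ (show tI (Sum.inr (n,j)) = n from rfl)
    exact measurable_iff_comap_le.2 h
  have hξG : ∀ m n i, n ≤ m → Measurable[G m] (ξ n i) := by
    intro m n i h
    refine measurable_iff_comap_le.2 ?_
    have h2 : mF (Sum.inl (n, i)) ≤ G m := by
      simp only [hGdef]
      exact le_biSup _ (show tI (Sum.inl (n,i)) ≤ m from h)
    exact h2
  have hηG : ∀ m n j, n ≤ m → Measurable[G m] (η n j) := by
    intro m n j h
    refine measurable_iff_comap_le.2 ?_
    have h2 : mF (Sum.inr (n, j)) ≤ G m := by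
      simp only [hGdef]
      exact le_biSup _ (show tI (Sum.inr (n,j)) ≤ m from h)
    exact h2
  have hXG : ∀ m, Measurable[G m] (X m) := by
    intro m
    induction m using Nat.strong_induction_on with
    | _ m ih =>
      rcases m with (_|_|k)
      · have h0 : X 0 = fun _ => 0 := funext hinit0
        rw [h0]; exact measurable_const
      · have h1 : X 1 = fun _ => 1 := funext hinit1
        rw [h1]; exact measurable_const
      · have hXeq : X (k+2) = fun ω => (∑ i ∈ Finset.range (X (k+1) ω), ξ (k+2) i ω)
            + ∑ j ∈ Finset.range (X k ω), η (k+2) j ω := by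
          funext ω; simpa using hrec (k+2) (by omega) ω
        rw [hXeq]
        have h1 : Measurable[G (k+2)] (X (k+1)) :=
          (ih (k+1) (by omega)).mono (hGmono (by omega)) le_rfl
        have h2 : Measurable[G (k+2)] (X k) :=
          (ih k (by omega)).mono (hGmono (by omega)) le_rfl
        exact (Stmt19.measurable_randSum _ _ h1 fun i => hξG (k+2) (k+2) i le_rfl).add
          (Stmt19.measurable_randSum _ _ h2 fun j => hηG (k+2) (k+2) j le_rfl)
  -- split infrastructure
  set P : ℕ → ℕ × ℕ → ℝ≥0∞ := fun n p => μ (X (n+1) ⁻¹' {p.1} ∩ X n ⁻¹' {p.2}) with hPdef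
  have hkey : ∀ n (F : ℕ → ℕ → Ω → ℝ≥0∞), (∀ k l, Measurable[Bk (n+2)] (F k l)) →
      ∫⁻ ω, F (X (n+1) ω) (X n ω) ω ∂μ = ∑' p : ℕ × ℕ, P n p * ∫⁻ ω, F p.1 p.2 ω ∂μ :=
    fun n F hF => Stmt19.split (hGle (n+1)) (hBkle (n+2)) (hIndepGB (n+1)) (hXG (n+1))
      ((hXG n).mono (hGmono (by omega)) le_rfl) hF
  have hconst : ∀ n (g : ℕ → ℕ → ℝ≥0∞),
      ∫⁻ ω, g (X (n+1) ω) (X n ω) ∂μ = ∑' p : ℕ × ℕ, P n p * g p.1 p.2 := by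
    intro n g
    have h := hkey n (fun k l _ => g k l) (fun k l => measurable_const)
    simpa [lintegral_const, measure_univ, mul_one] using h
  -- iid and independence facts
  have hcastE : Measurable fun x : ℕ => (x : ℝ≥0∞) := Measurable.of_discrete
  have hMxi : ∀ n i, ∫⁻ ω, (ξ n i ω : ℝ≥0∞) ∂μ = Mx := fun n i =>
    ((hξid n i).comp hcastE).lintegral_eq
  have hMyi : ∀ n j, ∫⁻ ω, (η n j ω : ℝ≥0∞) ∂μ = My := fun n j =>
    ((hηid n j).comp hcastE).lintegral_eq
  have hSxi : ∀ n i, ∫⁻ ω, (ξ n i ω : ℝ≥0∞) * (ξ n i ω : ℝ≥0∞) ∂μ = Sx := by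
    intro n i
    have h := ((hξid n i).comp (u := fun x : ℕ => ((x : ℝ≥0∞)) ^ 2)
      Measurable.of_discrete).lintegral_eq
    calc ∫⁻ ω, (ξ n i ω : ℝ≥0∞) * (ξ n i ω : ℝ≥0∞) ∂μ
        = ∫⁻ ω, ((ξ n i ω : ℝ≥0∞)) ^ 2 ∂μ := lintegral_congr fun ω => (pow_two _).symm
      _ = ∫⁻ ω, ((ξ 0 0 ω : ℝ≥0∞)) ^ 2 ∂μ := h
      _ = Sx := rfl
  have hSyi : ∀ n j, ∫⁻ ω, (η n j ω : ℝ≥0∞) * (η n j ω : ℝ≥0∞) ∂μ = Sy := by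
    intro n j
    have h := ((hηid n j).comp (u := fun x : ℕ => ((x : ℝ≥0∞)) ^ 2)
      Measurable.of_discrete).lintegral_eq
    calc ∫⁻ ω, (η n j ω : ℝ≥0∞) * (η n j ω : ℝ≥0∞) ∂μ
        = ∫⁻ ω, ((η n j ω : ℝ≥0∞)) ^ 2 ∂μ := lintegral_congr fun ω => (pow_two _).symm
      _ = ∫⁻ ω, ((η 0 0 ω : ℝ≥0∞)) ^ 2 ∂μ := h
      _ = Sy := rfl
  have hmul : ∀ (a b : (ℕ×ℕ) ⊕ (ℕ×ℕ)), a ≠ b →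
      ∫⁻ ω, (FF a ω : ℝ≥0∞) * (FF b ω : ℝ≥0∞) ∂μ
        = (∫⁻ ω, (FF a ω : ℝ≥0∞) ∂μ) * ∫⁻ ω, (FF b ω : ℝ≥0∞) ∂μ := by
    intro a b hab
    have hi : IndepFun (fun ω => (FF a ω : ℝ≥0∞)) (fun ω => (FF b ω : ℝ≥0∞)) μ :=
      (hindep.indepFun hab).comp hcastE hcastE
    have h := lintegral_mul_eq_lintegral_mul_lintegral_of_indepFun
      (hcastE.comp (hFFm a)) (hcastE.comp (hFFm b)) hi
    simpa [Pi.mul_apply] using h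
  have hmulξξ : ∀ n i j, i ≠ j →
      ∫⁻ ω, (ξ n i ω : ℝ≥0∞) * (ξ n j ω : ℝ≥0∞) ∂μ = Mx * Mx := by
    intro n i j hij
    have h : ∫⁻ ω, (ξ n i ω : ℝ≥0∞) * (ξ n j ω : ℝ≥0∞) ∂μ
        = (∫⁻ ω, (ξ n i ω : ℝ≥0∞) ∂μ) * ∫⁻ ω, (ξ n j ω : ℝ≥0∞) ∂μ :=
      hmul (Sum.inl (n,i)) (Sum.inl (n,j)) (by simp [hij])
    rw [h, hMxi, hMxi]
  have hmulηη : ∀ n i j, i ≠ j →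
      ∫⁻ ω, (η n i ω : ℝ≥0∞) * (η n j ω : ℝ≥0∞) ∂μ = My * My := by
    intro n i j hij
    have h : ∫⁻ ω, (η n i ω : ℝ≥0∞) * (η n j ω : ℝ≥0∞) ∂μ
        = (∫⁻ ω, (η n i ω : ℝ≥0∞) ∂μ) * ∫⁻ ω, (η n j ω : ℝ≥0∞) ∂μ :=
      hmul (Sum.inr (n,i)) (Sum.inr (n,j)) (by simp [hij])
    rw [h, hMyi, hMyi]
  have hmulξη : ∀ n i m j,
      ∫⁻ ω, (ξ n i ω : ℝ≥0∞) * (η m j ω : ℝ≥0∞) ∂μ = Mx * My := by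
    intro n i m j
    have h : ∫⁻ ω, (ξ n i ω : ℝ≥0∞) * (η m j ω : ℝ≥0∞) ∂μ
        = (∫⁻ ω, (ξ n i ω : ℝ≥0∞) ∂μ) * ∫⁻ ω, (η m j ω : ℝ≥0∞) ∂μ :=
      hmul (Sum.inl (n,i)) (Sum.inr (m,j)) (by simp)
    rw [h, hMxi, hMyi]
  have hmulηξ : ∀ n j m i,
      ∫⁻ ω, (η n j ω : ℝ≥0∞) * (ξ m i ω : ℝ≥0∞) ∂μ = My * Mx := by
    intro n j m i
    have h : ∫⁻ ω, (η n j ω : ℝ≥0∞) * (ξ m i ω : ℝ≥0∞) ∂μ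
        = (∫⁻ ω, (η n j ω : ℝ≥0∞) ∂μ) * ∫⁻ ω, (ξ m i ω : ℝ≥0∞) ∂μ :=
      hmul (Sum.inr (n,j)) (Sum.inl (m,i)) (by simp)
    rw [h, hMyi, hMxi]

  -- moment sequences
  set A : ℕ → ℝ≥0∞ := fun m => ∫⁻ ω, (X m ω : ℝ≥0∞) ∂μ with hAdef
  set Bq : ℕ → ℝ≥0∞ := fun m => ∫⁻ ω, ((X m ω : ℝ≥0∞)) ^ 2 ∂μ with hBdef
  set D : ℕ → ℝ≥0∞ := fun m => ∫⁻ ω, (X (m+1) ω : ℝ≥0∞) * (X m ω : ℝ≥0∞) ∂μ with hDdef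
  have hA0 : A 0 = 0 := by simp [hAdef, hinit0]
  have hA1 : A 1 = 1 := by simp [hAdef, hinit1]
  have hB0 : Bq 0 = 0 := by simp [hBdef, hinit0]
  have hB1 : Bq 1 = 1 := by simp [hBdef, hinit1]
  have hD0 : D 0 = 0 := by simp [hDdef, hinit0]
  have hXcast : ∀ n ω, (X (n+2) ω : ℝ≥0∞)
      = ∑ i ∈ Finset.range (X (n+1) ω), (ξ (n+2) i ω : ℝ≥0∞)
        + ∑ j ∈ Finset.range (X n ω), (η (n+2) j ω : ℝ≥0∞) := by
    intro n ω
    have h := hrec (n+2) (by omega) ω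
    simp only [show n+2-1 = n+1 from rfl, show n+2-2 = n from rfl] at h
    rw [h]
    push_cast
    ring
  have humeas : ∀ n i, Measurable fun ω => (ξ n i ω : ℝ≥0∞) := fun n i =>
    hcastE.comp (hξm n i)
  have hvmeas : ∀ n j, Measurable fun ω => (η n j ω : ℝ≥0∞) := fun n j =>
    hcastE.comp (hηm n j)
  have hblkM : ∀ n k l, Measurable[Bk (n+2)] (fun ω =>
      ∑ i ∈ Finset.range k, (ξ (n+2) i ω : ℝ≥0∞)
        + ∑ j ∈ Finset.range l, (η (n+2) j ω : ℝ≥0∞)) :=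
    fun n k l => (Finset.measurable_sum _ fun i _ => hcastE.comp (hξBk (n+2) i)).add
      (Finset.measurable_sum _ fun j _ => hcastE.comp (hηBk (n+2) j))
  have hblk1 : ∀ n k l, ∫⁻ ω, (∑ i ∈ Finset.range k, (ξ (n+2) i ω : ℝ≥0∞)
      + ∑ j ∈ Finset.range l, (η (n+2) j ω : ℝ≥0∞)) ∂μ = k * Mx + l * My := by
    intro n k l
    rw [lintegral_add_left (Finset.measurable_sum _ fun i _ => humeas (n+2) i),
      lintegral_finset_sum _ (fun i _ => humeas (n+2) i),
      lintegral_finset_sum _ (fun j _ => hvmeas (n+2) j)]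
    simp only [hMxi, hMyi, Finset.sum_const, Finset.card_range, nsmul_eq_mul]
  have hblk2 : ∀ n k l, ∫⁻ ω, (∑ i ∈ Finset.range k, (ξ (n+2) i ω : ℝ≥0∞)
      + ∑ j ∈ Finset.range l, (η (n+2) j ω : ℝ≥0∞)) ^ 2 ∂μ
      = ((k:ℝ≥0∞) * Sx + (k:ℝ≥0∞) * ((k:ℝ≥0∞)-1) * Mx^2)
        + ((k:ℝ≥0∞) * (l:ℝ≥0∞)) * (Mx*My) + ((l:ℝ≥0∞) * (k:ℝ≥0∞)) * (My*Mx)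
        + ((l:ℝ≥0∞) * Sy + (l:ℝ≥0∞) * ((l:ℝ≥0∞)-1) * My^2) := by
    intro n k l
    have hsa : Measurable (fun ω => ∑ i ∈ Finset.range k, (ξ (n+2) i ω : ℝ≥0∞)) :=
      Finset.measurable_sum _ fun i _ => humeas (n+2) i
    have hsb : Measurable (fun ω => ∑ j ∈ Finset.range l, (η (n+2) j ω : ℝ≥0∞)) :=
      Finset.measurable_sum _ fun j _ => hvmeas (n+2) j
    have hexp : ∀ ω, (∑ i ∈ Finset.range k, (ξ (n+2) i ω : ℝ≥0∞)
        + ∑ j ∈ Finset.range l, (η (n+2) j ω : ℝ≥0∞)) ^ 2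
        = (∑ i ∈ Finset.range k, (ξ (n+2) i ω:ℝ≥0∞)) * (∑ i ∈ Finset.range k, (ξ (n+2) i ω:ℝ≥0∞))
          + ((∑ i ∈ Finset.range k, (ξ (n+2) i ω:ℝ≥0∞)) * (∑ j ∈ Finset.range l, (η (n+2) j ω:ℝ≥0∞))
          + ((∑ j ∈ Finset.range l, (η (n+2) j ω:ℝ≥0∞)) * (∑ i ∈ Finset.range k, (ξ (n+2) i ω:ℝ≥0∞))
          + (∑ j ∈ Finset.range l, (η (n+2) j ω:ℝ≥0∞)) * (∑ j ∈ Finset.range l, (η (n+2) j ω:ℝ≥0∞)))) := by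
      intro ω; ring
    rw [lintegral_congr hexp, lintegral_add_left (hsa.fun_mul hsa),
      lintegral_add_left (hsa.fun_mul hsb), lintegral_add_left (hsb.fun_mul hsa)]
    rw [Stmt19.lint_sum_mul_sum _ _ (humeas (n+2)) (humeas (n+2)) k k
        (fun i j => if i = j then Sx else Mx^2) (fun i hi j hj => by
          show ∫⁻ ω, (ξ (n+2) i ω : ℝ≥0∞) * (ξ (n+2) j ω : ℝ≥0∞) ∂μ
            = if i = j then Sx else Mx^2
          by_cases h : i = j
          · subst h; rw [if_pos rfl]; exact hSxi (n+2) i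
          · rw [if_neg h]; exact (hmulξξ (n+2) i j h).trans (pow_two Mx).symm),
      Stmt19.lint_sum_mul_sum _ _ (humeas (n+2)) (hvmeas (n+2)) k l
        (fun _ _ => Mx * My) (fun i _ j _ => hmulξη (n+2) i (n+2) j),
      Stmt19.lint_sum_mul_sum _ _ (hvmeas (n+2)) (humeas (n+2)) l k
        (fun _ _ => My * Mx) (fun j _ i _ => hmulηξ (n+2) j (n+2) i),
      Stmt19.lint_sum_mul_sum _ _ (hvmeas (n+2)) (hvmeas (n+2)) l l
        (fun i j => if i = j then Sy else My^2) (fun i hi j hj => by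
          show ∫⁻ ω, (η (n+2) i ω : ℝ≥0∞) * (η (n+2) j ω : ℝ≥0∞) ∂μ
            = if i = j then Sy else My^2
          by_cases h : i = j
          · subst h; rw [if_pos rfl]; exact hSyi (n+2) i
          · rw [if_neg h]; exact (hmulηη (n+2) i j h).trans (pow_two My).symm),
      Stmt19.sum_ite_diag, Stmt19.sum_ite_diag]
    simp only [Finset.sum_const, Finset.card_range, nsmul_eq_mul]
    ring
  -- recursion identities
  have hArec : ∀ n, A (n+2) = Mx * A (n+1) + My * A n := by
    intro n
    have hstep := hkey n (fun k l ω => ∑ i ∈ Finset.range k, (ξ (n+2) i ω : ℝ≥0∞)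
      + ∑ j ∈ Finset.range l, (η (n+2) j ω : ℝ≥0∞)) (hblkM n)
    have hL : A (n+2) = ∑' p : ℕ×ℕ, P n p * ((p.1:ℝ≥0∞) * Mx + (p.2:ℝ≥0∞) * My) :=
      (lintegral_congr (hXcast n)).trans (hstep.trans (tsum_congr fun p => by
        rw [hblk1 n p.1 p.2]))
    rw [hL]
    calc ∑' p : ℕ×ℕ, P n p * ((p.1:ℝ≥0∞) * Mx + (p.2:ℝ≥0∞) * My)
        = ∑' p : ℕ×ℕ, (Mx * (P n p * p.1) + My * (P n p * p.2)) :=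
          tsum_congr fun p => by ring
      _ = Mx * ∑' p : ℕ×ℕ, P n p * p.1 + My * ∑' p : ℕ×ℕ, P n p * p.2 := by
          rw [ENNReal.tsum_add, ENNReal.tsum_mul_left, ENNReal.tsum_mul_left]
      _ = Mx * A (n+1) + My * A n := by
          rw [show A (n+1) = ∫⁻ ω, ((X (n+1) ω : ℝ≥0∞)) ∂μ from rfl,
            show A n = ∫⁻ ω, ((X n ω : ℝ≥0∞)) ∂μ from rfl,
            hconst n (fun k l => (k:ℝ≥0∞)), hconst n (fun k l => (l:ℝ≥0∞))]
  have hDrec : ∀ n, D (n+1) = Mx * Bq (n+1) + My * D n := by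
    intro n
    have hstep := hkey n (fun k l ω => (∑ i ∈ Finset.range k, (ξ (n+2) i ω : ℝ≥0∞)
      + ∑ j ∈ Finset.range l, (η (n+2) j ω : ℝ≥0∞)) * (k:ℝ≥0∞))
      (fun k l => (hblkM n k l).mul measurable_const)
    have hL : D (n+1) = ∑' p : ℕ×ℕ, P n p * (((p.1:ℝ≥0∞) * Mx + (p.2:ℝ≥0∞) * My) * p.1) := by
      refine Eq.trans ?_ (hstep.trans (tsum_congr fun p => by
        rw [lintegral_mul_const _ ((Finset.measurable_sum _ fun i _ => humeas (n+2) i).fun_add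
          (Finset.measurable_sum _ fun j _ => hvmeas (n+2) j)), hblk1 n p.1 p.2]))
      exact lintegral_congr fun ω => by rw [hXcast n ω]
    rw [hL]
    calc ∑' p : ℕ×ℕ, P n p * (((p.1:ℝ≥0∞) * Mx + (p.2:ℝ≥0∞) * My) * p.1)
        = ∑' p : ℕ×ℕ, (Mx * (P n p * (p.1:ℝ≥0∞)^2) + My * (P n p * ((p.1:ℝ≥0∞) * p.2))) :=
          tsum_congr fun p => by ring
      _ = Mx * ∑' p : ℕ×ℕ, P n p * (p.1:ℝ≥0∞)^2
          + My * ∑' p : ℕ×ℕ, P n p * ((p.1:ℝ≥0∞) * p.2) := by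
          rw [ENNReal.tsum_add, ENNReal.tsum_mul_left, ENNReal.tsum_mul_left]
      _ = Mx * Bq (n+1) + My * D n := by
          rw [show Bq (n+1) = ∫⁻ ω, ((X (n+1) ω : ℝ≥0∞))^2 ∂μ from rfl,
            show D n = ∫⁻ ω, (X (n+1) ω : ℝ≥0∞) * (X n ω : ℝ≥0∞) ∂μ from rfl,
            hconst n (fun k l => (k:ℝ≥0∞)^2), hconst n (fun k l => (k:ℝ≥0∞) * (l:ℝ≥0∞))]
  have hBrec : ∀ n, Bq (n+2) = Vx * A (n+1) + Vy * A n + Mx^2 * Bq (n+1) + My^2 * Bq n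
      + (2*(Mx*My)) * D n := by
    intro n
    have hstep := hkey n (fun k l ω => (∑ i ∈ Finset.range k, (ξ (n+2) i ω : ℝ≥0∞)
      + ∑ j ∈ Finset.range l, (η (n+2) j ω : ℝ≥0∞)) ^ 2)
      (fun k l => (hblkM n k l).pow_const 2)
    have hL : Bq (n+2) = ∑' p : ℕ×ℕ, P n p *
        ((((p.1:ℝ≥0∞)) * Sx + (p.1:ℝ≥0∞) * ((p.1:ℝ≥0∞)-1) * Mx^2)
          + ((p.1:ℝ≥0∞) * (p.2:ℝ≥0∞)) * (Mx*My) + ((p.2:ℝ≥0∞) * (p.1:ℝ≥0∞)) * (My*Mx)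
          + (((p.2:ℝ≥0∞)) * Sy + (p.2:ℝ≥0∞) * ((p.2:ℝ≥0∞)-1) * My^2)) := by
      refine Eq.trans ?_ (hstep.trans (tsum_congr fun p => by rw [hblk2 n p.1 p.2]))
      exact lintegral_congr fun ω => by rw [hXcast n ω]
    rw [hL]
    have hk : ∀ (k:ℕ) (S V M2 : ℝ≥0∞), S = V + M2 →
        (k:ℝ≥0∞) * S + (k:ℝ≥0∞) * ((k:ℝ≥0∞)-1) * M2 = (k:ℝ≥0∞) * V + ((k:ℝ≥0∞))^2 * M2 := by
      intro k S V M2 hSV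
      cases k with
      | zero => simp
      | succ j =>
        have h1 : ((j+1 : ℕ):ℝ≥0∞) - 1 = ((j:ℕ):ℝ≥0∞) := by
          push_cast
          exact ENNReal.add_sub_cancel_right ENNReal.one_ne_top
        rw [hSV, h1]
        push_cast
        ring
    calc ∑' p : ℕ×ℕ, P n p *
        ((((p.1:ℝ≥0∞)) * Sx + (p.1:ℝ≥0∞) * ((p.1:ℝ≥0∞)-1) * Mx^2)
          + ((p.1:ℝ≥0∞) * (p.2:ℝ≥0∞)) * (Mx*My) + ((p.2:ℝ≥0∞) * (p.1:ℝ≥0∞)) * (My*Mx)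
          + (((p.2:ℝ≥0∞)) * Sy + (p.2:ℝ≥0∞) * ((p.2:ℝ≥0∞)-1) * My^2))
        = ∑' p : ℕ×ℕ, (Vx * (P n p * (p.1:ℝ≥0∞)) + (Vy * (P n p * (p.2:ℝ≥0∞))
          + (Mx^2 * (P n p * ((p.1:ℝ≥0∞))^2) + (My^2 * (P n p * ((p.2:ℝ≥0∞))^2)
          + (2*(Mx*My)) * (P n p * ((p.1:ℝ≥0∞) * (p.2:ℝ≥0∞))))))) := by
          refine tsum_congr fun p => ?_
          rw [hk p.1 Sx Vx (Mx^2) hSxV, hk p.2 Sy Vy (My^2) hSyV]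
          ring
      _ = Vx * (∑' p : ℕ×ℕ, P n p * (p.1:ℝ≥0∞)) + (Vy * (∑' p : ℕ×ℕ, P n p * (p.2:ℝ≥0∞))
          + (Mx^2 * (∑' p : ℕ×ℕ, P n p * ((p.1:ℝ≥0∞))^2)
          + (My^2 * (∑' p : ℕ×ℕ, P n p * ((p.2:ℝ≥0∞))^2)
          + (2*(Mx*My)) * (∑' p : ℕ×ℕ, P n p * ((p.1:ℝ≥0∞) * (p.2:ℝ≥0∞)))))) := by
          rw [ENNReal.tsum_add, ENNReal.tsum_add, ENNReal.tsum_add, ENNReal.tsum_add,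
            ENNReal.tsum_mul_left, ENNReal.tsum_mul_left, ENNReal.tsum_mul_left,
            ENNReal.tsum_mul_left, ENNReal.tsum_mul_left]
      _ = Vx * A (n+1) + Vy * A n + Mx^2 * Bq (n+1) + My^2 * Bq n + (2*(Mx*My)) * D n := by
          rw [show A (n+1) = ∫⁻ ω, ((X (n+1) ω : ℝ≥0∞)) ∂μ from rfl,
            show A n = ∫⁻ ω, ((X n ω : ℝ≥0∞)) ∂μ from rfl,
            show Bq (n+1) = ∫⁻ ω, ((X (n+1) ω : ℝ≥0∞))^2 ∂μ from rfl,
            show Bq n = ∫⁻ ω, ((X n ω : ℝ≥0∞))^2 ∂μ from rfl,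
            show D n = ∫⁻ ω, (X (n+1) ω : ℝ≥0∞) * (X n ω : ℝ≥0∞) ∂μ from rfl,
            hconst n (fun k l => (k:ℝ≥0∞)), hconst n (fun k l => (l:ℝ≥0∞)),
            hconst n (fun k l => (k:ℝ≥0∞)^2), hconst n (fun k l => (l:ℝ≥0∞)^2),
            hconst n (fun k l => (k:ℝ≥0∞) * (l:ℝ≥0∞))]
          ring

  -- cancellation helper
  have hcancel : ∀ {a b : ℝ≥0∞} (j : ℕ), a * r ^ j ≤ b * r ^ j → a ≤ b := by
    intro a b j h
    exact (ENNReal.mul_le_mul_iff_left (pow_ne_zero j hr0) (ENNReal.pow_ne_top hrne)).1 h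
  have hMxle : Mx ≤ r ^ 2 := by
    refine hcancel 2 ?_
    calc Mx * r ^ 2 ≤ Mx * r ^ 2 + My := le_self_add
      _ = r ^ 4 := hrec4
      _ = r ^ 2 * r ^ 2 := by ring
  -- bounds on A
  have hAb : ∀ n, A (n+1) ≤ r ^ (2*n) ∧ A (n+2) ≤ r ^ (2*n+2) := by
    intro n
    induction n with
    | zero =>
      constructor
      · rw [hA1]; simp
      · show A 2 ≤ r ^ 2
        rw [show A 2 = Mx * A 1 + My * A 0 from hArec 0, hA1, hA0]
        simpa using hMxle
    | succ n ih =>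
      constructor
      · rw [show 2*(n+1) = 2*n+2 from by ring]; exact ih.2
      · rw [hArec (n+1)]
        calc Mx * A (n+2) + My * A (n+1) ≤ Mx * r^(2*n+2) + My * r^(2*n) :=
              add_le_add (mul_le_mul_right ih.2 Mx) (mul_le_mul_right ih.1 My)
          _ = (Mx * r^2 + My) * r^(2*n) := by ring
          _ = r^4 * r^(2*n) := by rw [hrec4]
          _ = r^(2*(n+1)+2) := by rw [← pow_add]; congr 1; ring
  -- bounds on B and D
  have hBDb : ∀ n, (Bq (n+1) ≤ C * r^(2*n)) ∧ (Bq (n+2) ≤ C * r^(2*n+2))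
      ∧ (D (n+1) * r ≤ C * r^(2*n+2)) := by
    intro n
    induction n with
    | zero =>
      refine ⟨?_, ?_, ?_⟩
      · rw [hB1]; simpa using hC1
      · show Bq 2 ≤ C * r^2
        rw [show Bq 2 = _ from hBrec 0, hA1, hA0, hB1, hB0, hD0]
        simp only [mul_one, mul_zero, add_zero]
        refine hcancel 2 ?_
        have h2 : Mx^2 * r^2 ≤ C * r^6 := by
          have h3 : Mx * r ≤ r^3 := le_trans le_self_add hrec3
          calc Mx^2 * r^2 = (Mx*r)*(Mx*r) := by ring
            _ ≤ r^3 * r^3 := mul_le_mul' h3 h3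
            _ = 1 * r^6 := by ring
            _ ≤ C * r^6 := mul_le_mul_left hC1 _
        calc (Vx + Mx^2) * r^2 = Vx * r^2 + Mx^2 * r^2 := by ring
          _ ≤ Vx * r^2 + (Vy + C * r^6) :=
              add_le_add_right (h2.trans (le_add_self)) _
          _ = Vx * r^2 + Vy + C * r^6 := by ring
          _ ≤ C * r^4 := hfinal
          _ = (C * r^2) * r^2 := by ring
      · show D 1 * r ≤ C * r^2
        rw [show D 1 = _ from hDrec 0, hB1, hD0]
        simp only [mul_one, mul_zero, add_zero]
        calc Mx * r ≤ r^3 := le_trans le_self_add hrec3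
          _ ≤ r^2 := by
              calc r^3 = r^2 * r := by ring
                _ ≤ r^2 * 1 := mul_le_mul_right hr1 _
                _ = r^2 := mul_one _
          _ = 1 * r^2 := (one_mul _).symm
          _ ≤ C * r^2 := mul_le_mul_left hC1 _
    | succ n ih =>
      obtain ⟨ih1, ih2, ih3⟩ := ih
      refine ⟨?_, ?_, ?_⟩
      · rw [show 2*(n+1) = 2*n+2 from by ring]; exact ih2
      · rw [show 2*(n+1)+2 = 2*n+4 from by ring, hBrec (n+1)]
        refine hcancel 2 ?_
        have hsq6 : (Mx*r + My)^2 ≤ r^6 := by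
          calc (Mx*r + My)^2 ≤ (r^3)^2 := pow_le_pow_left' hrec3 2
            _ = r^6 := by ring
        calc (Vx * A (n+2) + Vy * A (n+1) + Mx^2 * Bq (n+2) + My^2 * Bq (n+1)
              + (2*(Mx*My)) * D (n+1)) * r^2
            = Vx * A (n+2) * r^2 + Vy * A (n+1) * r^2 + Mx^2 * Bq (n+2) * r^2
              + My^2 * Bq (n+1) * r^2 + (2*(Mx*My)*r) * (D (n+1) * r) := by ring
          _ ≤ Vx * r^(2*n+2) * r^2 + Vy * r^(2*n) * r^2 + Mx^2 * (C*r^(2*n+2)) * r^2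
              + My^2 * (C*r^(2*n)) * r^2 + (2*(Mx*My)*r) * (C*r^(2*n+2)) := by
              refine add_le_add (add_le_add (add_le_add (add_le_add ?_ ?_) ?_) ?_) ?_
              · exact mul_le_mul_left (mul_le_mul_right (hAb n).2 Vx) _
              · exact mul_le_mul_left (mul_le_mul_right (hAb n).1 Vy) _
              · exact mul_le_mul_left (mul_le_mul_right ih2 _) _
              · exact mul_le_mul_left (mul_le_mul_right ih1 _) _
              · exact mul_le_mul_right ih3 _
          _ = (Vx*r^2 + Vy + C*((Mx*r + My)^2)) * r^(2*n+2) := by ring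
          _ ≤ (Vx*r^2 + Vy + C*r^6) * r^(2*n+2) :=
              mul_le_mul_left (add_le_add_right (mul_le_mul_right hsq6 C) _) _
          _ ≤ (C * r^4) * r^(2*n+2) := mul_le_mul_left hfinal _
          _ = (C * r^(2*n+4)) * r^2 := by ring
      · rw [show 2*(n+1)+2 = 2*n+4 from by ring, hDrec (n+1)]
        refine hcancel 1 ?_
        calc ((Mx * Bq (n+2) + My * D (n+1)) * r) * r^1
            = Mx * r^2 * Bq (n+2) + (My * r) * (D (n+1) * r) := by ring
          _ ≤ Mx * r^2 * (C * r^(2*n+2)) + (My * r) * (C * r^(2*n+2)) :=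
              add_le_add (mul_le_mul_right ih2 _) (mul_le_mul_right ih3 _)
          _ = (Mx * r + My) * (r * (C * r^(2*n+2))) := by ring
          _ ≤ r^3 * (r * (C * r^(2*n+2))) := mul_le_mul_left hrec3 _
          _ = ((C * r^(2*n+4)) * r^1) * r := by ring
          _ ≤ ((C * r^(2*n+4)) * r^1) * 1 := mul_le_mul_right hr1 _
          _ = (C * r^(2*n+4)) * r^1 := mul_one _
  -- conclusion
  intro n _hn
  have hBle : Bq (n+1) ≤ C * r^(2*n) := (hBDb n).1
  have hfinne : C * r^(2*n) ≠ ∞ :=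
    ENNReal.mul_ne_top ENNReal.ofReal_ne_top (ENNReal.pow_ne_top hrne)
  have hintrepr : ∫ ω, (X (n+1) ω : ℝ)^2 ∂μ = (Bq (n+1)).toReal := by
    rw [integral_eq_lintegral_of_nonneg_ae (f := fun ω => ((X (n+1) ω : ℝ))^2)
      (Filter.Eventually.of_forall fun ω => by positivity)
      ((hcastM.comp (hXm (n+1))).pow_const 2).aestronglyMeasurable]
    congr 1
    rw [show Bq (n+1) = ∫⁻ ω, ((X (n+1) ω : ℝ≥0∞))^2 ∂μ from rfl]
    exact (lintegral_congr fun ω => by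
      rw [ENNReal.ofReal_pow (by positivity), ENNReal.ofReal_natCast]).symm
  rw [hintrepr]
  calc (Bq (n+1)).toReal ≤ (C * r^(2*n)).toReal := ENNReal.toReal_mono hfinne hBle
    _ = c * ϱ^n := by
      rw [ENNReal.toReal_mul, ENNReal.toReal_pow, hCdef, ENNReal.toReal_ofReal hc0,
        hrdef, ENNReal.toReal_ofReal hsqnn, pow_mul, hsq]
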